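/- For every real number L > 0, there are infinitely many integers n ≥ 2 such that Z(n−1) > L · Z(n); equivalently, the ratio Z(n−1)/Z(n) of consecutive values of Z is unbounded. -/

import Mathlib

/-- The m-th triangular number. -/
def T (m : ℕ) : ℕ := m * (m + 1) / 2

/-- The pseudo-Smarandache function: the least positive m with n ∣ T m. -/
noncomputable def Z (n : ℕ) : ℕ := sInf {m : ℕ | 0 < m ∧ n ∣ T m}

lemma T_mul_two (m : ℕ) : T m * 2 = m * (m + 1) :=
  Nat.div_mul_cancel (Nat.even_mul_succ_self m).two_dvd

lemma dvd_T {n m c : ℕ} (h : m * (m + 1) = n * c * 2) : n ∣ T m := by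
  refine ⟨c, ?_⟩
  have h2 : T m * 2 = n * c * 2 := by rw [T_mul_two, h]
  exact Nat.eq_of_mul_eq_mul_right (by norm_num) h2

lemma coprime_two_of_odd {n : ℕ} (h : Odd n) : Nat.Coprime 2 n := by
  rw [Nat.prime_two.coprime_iff_not_dvd]
  intro h2
  rw [Nat.odd_iff] at h
  omega

lemma Z_two_pow_le (s : ℕ) : 2 ^ s ≤ Z (2 ^ s) := by
  have h1 : (1 : ℕ) ≤ 2 ^ s := Nat.one_le_two_pow
  have hne : {m : ℕ | 0 < m ∧ 2 ^ s ∣ T m}.Nonempty := by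
    refine ⟨2 ^ (s + 1) - 1, ?_, dvd_T (c := 2 ^ (s + 1) - 1) ?_⟩
    · have : (1:ℕ) ≤ 2 ^ (s+1) := Nat.one_le_two_pow
      omega
    · have hx : 2 ^ (s+1) - 1 + 1 = 2 ^ (s+1) := by
        have : (1:ℕ) ≤ 2 ^ (s+1) := Nat.one_le_two_pow
        omega
      rw [hx, pow_succ]
      ring
  obtain ⟨hpos, c, hc⟩ := Nat.sInf_mem hne
  set m := sInf {m : ℕ | 0 < m ∧ 2 ^ s ∣ T m} with hm
  have hmm : m * (m + 1) = 2 ^ (s+1) * c := by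
    rw [← T_mul_two, hc, pow_succ]; ring
  have : Z (2 ^ s) = m := rfl
  rw [this]
  rcases Nat.even_or_odd m with hev | hod
  · have hco : Nat.Coprime (2 ^ (s+1)) (m + 1) :=
      (coprime_two_of_odd (Even.add_one hev)).pow_left _
    have hdvd : 2 ^ (s+1) ∣ m := hco.dvd_of_dvd_mul_right ⟨c, hmm⟩
    have hle := Nat.le_of_dvd hpos hdvd
    rw [pow_succ] at hle
    omega
  · have hco : Nat.Coprime (2 ^ (s+1)) m :=
      (coprime_two_of_odd hod).pow_left _
    have hdvd : 2 ^ (s+1) ∣ (m + 1) := hco.dvd_of_dvd_mul_left ⟨c, hmm⟩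
    have hle := Nat.le_of_dvd (by omega) hdvd
    rw [pow_succ] at hle
    omega

theorem stmt_10 (L : ℝ) (hL : 0 < L) :
    {n : ℕ | 2 ≤ n ∧ (Z (n - 1) : ℝ) > L * (Z n : ℝ)}.Infinite := by
  obtain ⟨c, hc⟩ := exists_nat_gt L
  set j := c + 1 with hj
  have hjL : L < ((2 ^ j : ℕ) : ℝ) := by
    have h1 : c < 2 ^ j := by
      calc c < 2 ^ c := c.lt_two_pow_self
        _ ≤ 2 ^ j := Nat.pow_le_pow_right (by norm_num) (by omega)
    calc L < (c : ℝ) := hc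
      _ ≤ ((2 ^ j : ℕ) : ℝ) := by exact_mod_cast h1.le
  set a := 2 ^ j + 1 with ha
  have haodd : Odd a := by
    refine Even.add_one ?_
    exact (Nat.even_pow).mpr ⟨even_iff_two_dvd.mpr ⟨1, rfl⟩, by omega⟩
  set A := a * a with hA
  have hAodd : Odd A := haodd.mul haodd
  have hco2 : Nat.Coprime 2 A := coprime_two_of_odd hAodd
  set e := A.totient with he
  have hepos : 0 < e := Nat.totient_pos.mpr (by positivity)
  apply Set.infinite_of_injective_forall_mem
    (f := fun t : ℕ => 2 ^ (j + (t + 1) * e) + 1)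
  case hi =>
    intro t₁ t₂ h
    simp only [add_left_inj] at h
    have h2 := Nat.pow_right_injective (le_refl 2) h
    have h3 : (t₁ + 1) * e = (t₂ + 1) * e := by omega
    have := Nat.eq_of_mul_eq_mul_right hepos h3
    omega
  case hf =>
    intro t
    set s := j + (t + 1) * e with hs
    have heuler : 2 ^ e ≡ 1 [MOD A] := Nat.ModEq.pow_totient hco2
    have hmod : 2 ^ ((t + 1) * e) ≡ 1 [MOD A] := by
      rw [mul_comm, pow_mul]
      simpa using heuler.pow (t + 1)
    have hmod2 : 2 ^ s ≡ 2 ^ j [MOD A] := by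
      rw [hs, pow_add]
      simpa using hmod.mul_left (2 ^ j)
    have hle : 2 ^ j ≤ 2 ^ s := Nat.pow_le_pow_right (by norm_num) (by omega)
    have hlt : 2 ^ j < 2 ^ s := by
      apply Nat.pow_lt_pow_right (by norm_num)
      have : 1 ≤ (t + 1) * e := Nat.one_le_iff_ne_zero.mpr (by positivity)
      omega
    obtain ⟨K, hK⟩ := (Nat.modEq_iff_dvd' hle).mp hmod2.symm
    have hKe : 2 ^ s = A * K + 2 ^ j := by
      have := (Nat.sub_eq_iff_eq_add hle).mp hK
      omega
    have hKpos : 0 < K := by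
      rcases Nat.eq_zero_or_pos K with h0 | h
      · rw [h0, mul_zero] at hKe; omega
      · exact h
    have hK2 : 2 ∣ K := by
      apply hco2.dvd_of_dvd_mul_left
      rw [← hK]
      exact Nat.dvd_sub (dvd_pow_self 2 (by omega)) (dvd_pow_self 2 (by omega))
    obtain ⟨K', hK'⟩ := hK2
    set n := 2 ^ s + 1 with hn
    have h1s : (1:ℕ) ≤ 2 ^ s := Nat.one_le_two_pow
    have hn1 : n - 1 = 2 ^ s := by omega
    have hna : n = a * (a * K + 1) := by
      rw [hn, hKe, hA, ha]; ring
    have haKpos : 0 < a * K := Nat.mul_pos (by positivity) hKpos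
    have hZn : Z n ≤ a * K := by
      apply Nat.sInf_le
      refine ⟨haKpos, dvd_T (c := K') ?_⟩
      rw [hna, hK']; ring
    show 2 ≤ n ∧ (Z (n - 1) : ℝ) > L * (Z n : ℝ)
    constructor
    · omega
    · rw [hn1]
      have key : 2 ^ j * (a * K) < 2 ^ s :=
        calc 2 ^ j * (a * K) < a * (a * K) :=
              Nat.mul_lt_mul_of_lt_of_le (by omega) (le_refl _) haKpos
          _ = A * K := by rw [hA]; ring
          _ ≤ A * K + 2 ^ j := Nat.le_add_right _ _
          _ = 2 ^ s := hKe.symm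
      have c1 : (Z n : ℝ) ≤ ((a * K : ℕ) : ℝ) := Nat.cast_le.mpr hZn
      have c2 : ((2 ^ s : ℕ) : ℝ) ≤ (Z (2 ^ s) : ℝ) := Nat.cast_le.mpr (Z_two_pow_le s)
      have cpos : (0 : ℝ) < ((a * K : ℕ) : ℝ) := by exact_mod_cast haKpos
      calc L * (Z n : ℝ) ≤ L * ((a * K : ℕ) : ℝ) :=
            mul_le_mul_of_nonneg_left c1 hL.le
        _ < ((2 ^ j : ℕ) : ℝ) * ((a * K : ℕ) : ℝ) :=
            mul_lt_mul_of_pos_right hjL cpos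
        _ = ((2 ^ j * (a * K) : ℕ) : ℝ) := by push_cast; ring
        _ < ((2 ^ s : ℕ) : ℝ) := Nat.cast_lt.mpr key
        _ ≤ (Z (2 ^ s) : ℝ) := c2
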